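/- The extended And-Or path split (3): for 0 ≤ i ≤ j ≤ k < m with j - i even and 1 ≤ λ ≤ (k-j)/2, φ_{i,j,k} = φ_{i,j,j+2λ-1} ∨ φ_{i,j+2λ,k}, where φ_{i,j,k} := t_i ∧ t_{i+2} ∧ ... ∧ t_{j-2} ∧ g(t_j,...,t_k). -/

import Mathlib

mutual
  /-- And-Or path starting with AND: `gA [t₀,…,t_{m-1}] = t₀ ∧ (t₁ ∨ (t₂ ∧ …))`. -/
  def gA : List Bool → Bool
    | [] => false
    | t :: r => t && gO r
  /-- Dual And-Or path starting with OR: `gO [t₀,…] = t₀ ∨ (t₁ ∧ …)`. -/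
  def gO : List Bool → Bool
    | [] => true
    | t :: r => t || gA r
end

/-- Extended And-Or path `φ_{i,j,k} = t_i ∧ t_{i+2} ∧ … ∧ t_{j-2} ∧ g(t_j,…,t_k)`. -/
def phi (t : ℕ → Bool) (i j k : ℕ) : Bool :=
  (((List.range' i ((j - i) / 2) 2).map t).all id) &&
    gA ((List.range' j (k + 1 - j)).map t)

/-- Dual extended And-Or path `φ*_{i,j,k} = t_i ∨ t_{i+2} ∨ … ∨ t_{j-2} ∨ g*(t_j,…,t_k)`. -/
def phiStar (t : ℕ → Bool) (i j k : ℕ) : Bool :=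
  (((List.range' i ((j - i) / 2) 2).map t).any id) ||
    gO ((List.range' j (k + 1 - j)).map t)

lemma gA_append_even (t : ℕ → Bool) : ∀ (n j : ℕ) (r : List Bool),
    gA (((List.range' j (2*n)).map t) ++ r)
      = (gA ((List.range' j (2*n)).map t) ||
         ((((List.range' j n 2).map t).all id) && gA r))
  | 0, j, r => by simp [gA, gO]
  | n+1, j, r => by
    have h2 : 2*(n+1) = 2*n + 1 + 1 := by ring
    rw [h2]
    simp only [List.range'_succ, List.map_cons, List.cons_append, gA, gO, List.all_cons]
    rw [show j + 1 + 1 = j + 2 by ring, gA_append_even t n (j+2) r]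
    cases t j <;> cases t (j+1) <;> simp [gA, gO]

/-- Split (3): for `i ≤ j ≤ k < m`, `j - i` even and `1 ≤ λ ≤ (k-j)/2`,
`φ_{i,j,k} = φ_{i,j,j+2λ-1} ∨ φ_{i,j+2λ,k}`. -/
theorem phi_split_or (m i j k lam : ℕ) (t : ℕ → Bool)
    (hij : i ≤ j) (hjk : j ≤ k) (hkm : k < m) (heven : Even (j - i))
    (hlam1 : 1 ≤ lam) (hlam2 : 2 * lam ≤ k - j) :
    phi t i j k = (phi t i j (j + 2 * lam - 1) || phi t i (j + 2 * lam) k) := by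
  obtain ⟨c, hc⟩ := heven
  have hji : j = i + 2 * c := by omega
  unfold phi
  -- arithmetic simplifications
  have h1 : j + 2 * lam - 1 + 1 - j = 2 * lam := by omega
  have h2 : (j - i) / 2 = c := by omega
  have h3 : (j + 2 * lam - i) / 2 = c + lam := by omega
  have h4 : k + 1 - j = (k + 1 - (j + 2 * lam)) + 2 * lam := by omega
  rw [h1, h2, h3, h4]
  rw [Nat.add_comm (k + 1 - (j + 2 * lam)) (2 * lam),
    ← List.range'_append (s := j) (m := 2 * lam) (n := k + 1 - (j + 2*lam)) (step := 1)]
  have h5 : j + 1 * (2 * lam) = j + 2 * lam := by ring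
  rw [h5, List.map_append, gA_append_even t lam j]
  rw [show c + lam = lam + c from Nat.add_comm c lam,
    ← Nat.add_comm c lam, ← List.range'_append (s := i) (m := c) (n := lam) (step := 2)]
  have h6 : i + 2 * c = j := hji.symm
  rw [h6, List.map_append, List.all_append]
  cases (((List.range' i c 2).map t).all id) <;>
    cases (((List.range' j lam 2).map t).all id) <;> simp [Bool.and_or_distrib_left]
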